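/- Let h : ℕ → ℕ be a function taking positive values and let j > 0 be an integer such that for all d ≥ j one has h(d+1) = h(d)^{⟨d⟩}. Then for all d ≥ j, the d-th Macaulay difference set of h(d) equals the j-th Macaulay difference set of h(j); that is, writing the d-binomial expansion of h(d) as Σ_{i=δ_d}^{d} C(k_i^{(d)}, i) and the j-binomial expansion of h(j) as Σ_{i=δ_j}^{j} C(k_i^{(j)}, i), one has d − δ_d = j − δ_j and k^{(d)}_{d−t} − (d−t) = k^{(j)}_{j−t} − (j−t) for all 0 ≤ t ≤ d − δ_d. -/

import Mathlib

/-- `IsBinomialExpansion c d δ k` says that `c = ∑_{i=δ}^{d} C(k i, i)` is a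
`d`-binomial expansion of `c`: `0 < δ ≤ d`, the values `k i` are strictly increasing
in `i` on `[δ, d]` (i.e. `k_d > k_{d-1} > ⋯ > k_δ`), and `k δ ≥ δ`. -/
def IsBinomialExpansion (c d δ : ℕ) (k : ℕ → ℕ) : Prop :=
  0 < δ ∧ δ ≤ d ∧ (∀ i, δ ≤ i → i < d → k i < k (i + 1)) ∧ δ ≤ k δ ∧
    c = ∑ i ∈ Finset.Icc δ d, Nat.choose (k i) i

/-- Hockey stick: `∑_{i=0}^{d} C(r+i, i) = C(r+d+1, d)`. -/
lemma hockey (r : ℕ) : ∀ d : ℕ,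
    ∑ i ∈ Finset.range (d + 1), Nat.choose (r + i) i = Nat.choose (r + d + 1) d
  | 0 => by simp
  | (d + 1) => by
    rw [Finset.sum_range_succ, hockey r d]
    have h := Nat.choose_succ_succ' (r + d + 1) d
    have : r + (d + 1) + 1 = r + d + 1 + 1 := by omega
    rw [this, h]
    have : r + (d + 1) = r + d + 1 := by omega
    rw [this]

/-- Inside an expansion, `k i + m ≤ k (i + m)` when everything is in range. -/
lemma IBE_k_add {c d δ : ℕ} {k : ℕ → ℕ} (h : IsBinomialExpansion c d δ k) :
    ∀ m i, δ ≤ i → i + m ≤ d → k i + m ≤ k (i + m) := by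
  obtain ⟨h0, hδd, hmono, hkδ, -⟩ := h
  intro m
  induction m with
  | zero => intro i _ _; simp
  | succ m IH =>
    intro i hi hle
    have h1 := IH i hi (by omega)
    have h2 := hmono (i + m) (by omega) (by omega)
    show k i + (m + 1) ≤ k (i + m + 1)
    omega


/-- Inside an expansion, `i ≤ k i` on `[δ, d]`. -/
lemma IBE_le_k {c d δ : ℕ} {k : ℕ → ℕ} (h : IsBinomialExpansion c d δ k) :
    ∀ i, δ ≤ i → i ≤ d → i ≤ k i := by
  intro i hi hid
  have hadd := IBE_k_add h (i - δ) δ le_rfl (by omega)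
  rw [show δ + (i - δ) = i by omega] at hadd
  have hkδ := h.2.2.2.1
  omega

/-- Key bound: `c < C(k d + 1, d)`. -/
lemma IBE_lt {c d δ : ℕ} {k : ℕ → ℕ} (h : IsBinomialExpansion c d δ k) :
    c < Nat.choose (k d + 1) d := by
  obtain ⟨h0, hδd, hmono, hkδ, hsum⟩ := h
  have hkd : d ≤ k d := IBE_le_k ⟨h0, hδd, hmono, hkδ, hsum⟩ d (by omega) le_rfl
  set r := k d - d with hr
  have hrd : r + d = k d := by omega
  -- termwise: k i ≤ r + i
  have hterm : ∀ i ∈ Finset.Icc δ d, Nat.choose (k i) i ≤ Nat.choose (r + i) i := by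
    intro i hi
    simp only [Finset.mem_Icc] at hi
    have hadd := IBE_k_add ⟨h0, hδd, hmono, hkδ, hsum⟩ (d - i) i hi.1 (by omega)
    rw [show i + (d - i) = d by omega] at hadd
    have hki : k i ≤ r + i := by omega
    exact Nat.choose_le_choose i hki
  have h1 : c ≤ ∑ i ∈ Finset.Icc δ d, Nat.choose (r + i) i := by
    rw [hsum]; exact Finset.sum_le_sum hterm
  have h2 : ∑ i ∈ Finset.Icc δ d, Nat.choose (r + i) i <
      ∑ i ∈ Finset.range (d + 1), Nat.choose (r + i) i := by
    rw [Finset.range_eq_Ico]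
    have hsub : Finset.Icc δ d ⊆ Finset.Ico 0 (d + 1) := by
      intro x hx; simp only [Finset.mem_Icc] at hx; simp; omega
    apply Finset.sum_lt_sum_of_subset hsub (i := 0) (by simp) (by simp; omega) (by simp)
    intro x _ _
    exact Nat.zero_le _
  have h3 := hockey r d
  rw [hrd] at h3
  omega

/-- The top binomial coefficient is at most `c`. -/
lemma IBE_top_le {c d δ : ℕ} {k : ℕ → ℕ} (h : IsBinomialExpansion c d δ k) :
    Nat.choose (k d) d ≤ c := by
  obtain ⟨h0, hδd, hmono, hkδ, hsum⟩ := h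
  rw [hsum]
  exact Finset.single_le_sum (f := fun i => Nat.choose (k i) i)
    (fun i _ => Nat.zero_le _) (Finset.mem_Icc.2 ⟨hδd, le_rfl⟩)

/-- Uniqueness of the `d`-binomial expansion. -/
lemma IBE_unique : ∀ d c δ δ' (k k' : ℕ → ℕ), IsBinomialExpansion c d δ k →
    IsBinomialExpansion c d δ' k' →
    δ = δ' ∧ ∀ i, δ ≤ i → i ≤ d → k i = k' i := by
  intro d
  induction d using Nat.strong_induction_on with
  | _ d IH =>
    intro c δ δ' k k' h1 h2
    have htop : k d = k' d := by
      have a1 := IBE_top_le h1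
      have a2 := IBE_lt h1
      have b1 := IBE_top_le h2
      have b2 := IBE_lt h2
      by_contra hne
      rcases Nat.lt_or_ge (k d) (k' d) with hlt | hge
      · have := Nat.choose_le_choose d (show k d + 1 ≤ k' d by omega)
        omega
      · have := Nat.choose_le_choose d (show k' d + 1 ≤ k d by omega)
        omega
    obtain ⟨h01, hδd1, hmono1, hkδ1, hsum1⟩ := h1
    obtain ⟨h02, hδd2, hmono2, hkδ2, hsum2⟩ := h2
    obtain ⟨e, rfl⟩ : ∃ e, d = e + 1 := ⟨d - 1, by omega⟩
    have hsplit1 : c = (∑ i ∈ Finset.Icc δ e, Nat.choose (k i) i) +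
        Nat.choose (k (e + 1)) (e + 1) := by
      rcases Nat.lt_or_ge e δ with hlt | hge
      · have : δ = e + 1 := by omega
        subst this
        rw [hsum1]
        simp
      · rw [hsum1, Finset.sum_Icc_succ_top (by omega : δ ≤ e + 1)]
    have hsplit2 : c = (∑ i ∈ Finset.Icc δ' e, Nat.choose (k' i) i) +
        Nat.choose (k' (e + 1)) (e + 1) := by
      rcases Nat.lt_or_ge e δ' with hlt | hge
      · have : δ' = e + 1 := by omega
        subst this
        rw [hsum2]
        simp
      · rw [hsum2, Finset.sum_Icc_succ_top (by omega : δ' ≤ e + 1)]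
    set c' := c - Nat.choose (k (e + 1)) (e + 1) with hc'
    have hc1 : c' = ∑ i ∈ Finset.Icc δ e, Nat.choose (k i) i := by omega
    have hc2 : c' = ∑ i ∈ Finset.Icc δ' e, Nat.choose (k' i) i := by
      rw [hc', htop]; omega
    -- case split on δ = e+1 / δ' = e+1
    rcases Nat.lt_or_ge e δ with hd1 | hd1
    · -- δ = e + 1
      have hδ : δ = e + 1 := by omega
      have hδ' : δ' = e + 1 := by
        by_contra hne
        have hδ'e : δ' ≤ e := by omega
        have hc'0 : c' = 0 := by
          rw [hc1, hδ]
          simp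
        have hmem : δ' ∈ Finset.Icc δ' e := Finset.mem_Icc.2 ⟨le_rfl, hδ'e⟩
        have hposterm : 0 < Nat.choose (k' δ') δ' := Nat.choose_pos hkδ2
        have hle := Finset.single_le_sum (f := fun i => Nat.choose (k' i) i)
          (fun i _ => Nat.zero_le _) hmem
        omega
      refine ⟨by omega, ?_⟩
      intro i hi hile
      have : i = e + 1 := by omega
      subst this
      exact htop
    · -- δ ≤ e
      have hδ'le : δ' ≤ e := by
        by_contra hne
        have hδ' : δ' = e + 1 := by omega
        have hc'0 : c' = 0 := by
          rw [hc2, hδ']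
          simp
        have hmem : δ ∈ Finset.Icc δ e := Finset.mem_Icc.2 ⟨le_rfl, by omega⟩
        have hposterm : 0 < Nat.choose (k δ) δ := Nat.choose_pos hkδ1
        have hle := Finset.single_le_sum (f := fun i => Nat.choose (k i) i)
          (fun i _ => Nat.zero_le _) hmem
        omega
      have he1 : IsBinomialExpansion c' e δ k :=
        ⟨h01, by omega, fun i hi hie => hmono1 i hi (by omega), hkδ1, hc1⟩
      have he2 : IsBinomialExpansion c' e δ' k' :=
        ⟨h02, hδ'le, fun i hi hie => hmono2 i hi (by omega), hkδ2, hc2⟩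
      obtain ⟨hδeq, hkeq⟩ := IH e (by omega) c' δ δ' k k' he1 he2
      refine ⟨hδeq, ?_⟩
      intro i hi hile
      rcases Nat.lt_or_ge i (e + 1) with hlt | hge
      · exact hkeq i hi (by omega)
      · have : i = e + 1 := by omega
        subst this
        exact htop

/-- `n - k ≤ C(n, k+1)`. -/
lemma sub_le_choose : ∀ (m n : ℕ), n - m ≤ Nat.choose n (m + 1) := by
  intro m
  induction m with
  | zero => intro n; simp
  | succ m IH =>
    intro n
    cases n with
    | zero => simp
    | succ n =>
      have h1 := IH n
      have h2 := Nat.choose_succ_succ' n (m + 1)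
      omega

/-- Existence of a `d`-binomial expansion for `0 < c`, `0 < d`. -/
lemma IBE_exists : ∀ d c, 0 < d → 0 < c → ∃ δ k, IsBinomialExpansion c d δ k := by
  intro d
  induction d with
  | zero => intro c h; omega
  | succ d IH =>
    intro c _ hc
    rcases Nat.eq_zero_or_pos d with rfl | hd
    · -- d = 1 case (succ 0)
      refine ⟨1, fun _ => c, ?_⟩
      refine ⟨by omega, le_rfl, fun i hi hie => by omega, hc, ?_⟩
      simp
    · -- d ≥ 1, build for d+1
      set P : ℕ → Prop := fun n => Nat.choose n (d + 1) ≤ c with hP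
      have : DecidablePred P := fun n => by rw [hP]; infer_instance
      set m := Nat.findGreatest P (c + d + 1) with hm
      have hmge : d + 1 ≤ m := by
        apply Nat.le_findGreatest (by omega)
        show Nat.choose (d + 1) (d + 1) ≤ c
        rw [Nat.choose_self]; exact hc
      have hPm : Nat.choose m (d + 1) ≤ c := by
        have := Nat.findGreatest_of_ne_zero hm.symm (by omega)
        exact this
      have hPm1 : c < Nat.choose (m + 1) (d + 1) := by
        rcases Nat.lt_or_ge (c + d + 1) (m + 1) with hgt | hle
        · -- m + 1 > c + d + 1, so m ≥ c + d + 1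
          have := sub_le_choose d (m + 1)
          by_contra hcon
          omega
        · have := Nat.findGreatest_is_greatest (P := P)
            (show Nat.findGreatest P (c + d + 1) < m + 1 by omega) hle
          rw [hP] at this
          simp only [not_le] at this
          exact this
      have hpascal : Nat.choose (m + 1) (d + 1) =
          Nat.choose m d + Nat.choose m (d + 1) := Nat.choose_succ_succ' m d
      set c' := c - Nat.choose m (d + 1) with hc'
      have hc'lt : c' < Nat.choose m d := by omega
      rcases Nat.eq_zero_or_pos c' with hz | hpos'
      · refine ⟨d + 1, fun _ => m, ?_⟩
        refine ⟨by omega, le_rfl, fun i hi hie => by omega, hmge, ?_⟩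
        rw [Finset.Icc_self, Finset.sum_singleton]
        show c = Nat.choose m (d + 1)
        omega
      · obtain ⟨δ0, k0, hk0⟩ := IH c' hd hpos'
        have hk0top : k0 d < m := by
          have a1 := IBE_top_le hk0
          by_contra hge
          have := Nat.choose_le_choose d (show m ≤ k0 d by omega)
          omega
        obtain ⟨h00, h0d, h0mono, h0kδ, h0sum⟩ := hk0
        refine ⟨δ0, fun i => if i = d + 1 then m else k0 i, ?_⟩
        refine ⟨h00, by omega, ?_, ?_, ?_⟩
        · intro i hi hie
          rcases Nat.lt_or_ge i d with hlt | hge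
          · simp only [if_neg (by omega : i ≠ d + 1), if_neg (by omega : i + 1 ≠ d + 1)]
            exact h0mono i hi hlt
          · have hid : i = d := by omega
            show (if i = d + 1 then m else k0 i) < (if i + 1 = d + 1 then m else k0 (i + 1))
            rw [if_neg (by omega : i ≠ d + 1), if_pos (show i + 1 = d + 1 by omega), hid]
            exact hk0top
        · simp only [if_neg (by omega : δ0 ≠ d + 1)]
          exact h0kδ
        · show c = ∑ i ∈ Finset.Icc δ0 (d + 1),
              Nat.choose (if i = d + 1 then m else k0 i) i
          rw [Finset.sum_Icc_succ_top (by omega : δ0 ≤ d + 1), if_pos rfl]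
          have : ∑ i ∈ Finset.Icc δ0 d, Nat.choose (if i = d + 1 then m else k0 i) i =
              ∑ i ∈ Finset.Icc δ0 d, Nat.choose (k0 i) i := by
            apply Finset.sum_congr rfl
            intro i hi
            simp only [Finset.mem_Icc] at hi
            rw [if_neg (by omega : i ≠ d + 1)]
          rw [this, ← h0sum]
          omega

/-- Shift lemma: from an expansion of `c` at level `d` we get an expansion of
`c^{⟨d⟩}` at level `d+1`. -/
lemma IBE_shift {c d δ : ℕ} {k : ℕ → ℕ} (h : IsBinomialExpansion c d δ k) :
    IsBinomialExpansion (∑ i ∈ Finset.Icc δ d, Nat.choose (k i + 1) (i + 1))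
      (d + 1) (δ + 1) (fun i => k (i - 1) + 1) := by
  obtain ⟨h0, hδd, hmono, hkδ, hsum⟩ := h
  refine ⟨by omega, by omega, ?_, ?_, ?_⟩
  · intro i hi hie
    simp only
    rw [show i + 1 - 1 = i from rfl]
    have hm := hmono (i - 1) (by omega) (by omega)
    rw [show i - 1 + 1 = i by omega] at hm
    omega
  · simp only
    rw [show δ + 1 - 1 = δ from rfl]
    omega
  · rw [show Finset.Icc (δ + 1) (d + 1) = (Finset.Icc δ d).map (addRightEmbedding 1) by
      rw [Finset.map_add_right_Icc], Finset.sum_map]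
    apply Finset.sum_congr rfl
    intro i hi
    simp [addRightEmbedding]

/-- If `h : ℕ → ℕ` takes positive values and `h (d+1) = (h d)^{⟨d⟩}` for all `d ≥ j`
(where `c^{⟨d⟩} = ∑_{i=δ}^{d} C(k_i + 1, i + 1)` is computed from the `d`-binomial
expansion `c = ∑_{i=δ}^{d} C(k_i, i)`), then for all `d ≥ j` the `d`-th Macaulay
difference set of `h d` equals the `j`-th Macaulay difference set of `h j`:
the two tuples have the same length `d - δ_d = j - δ_j` and the same entries
`k^{(d)}_{d-t} - (d-t) = k^{(j)}_{j-t} - (j-t)` for all `0 ≤ t ≤ d - δ_d`. -/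
theorem macaulay_difference_set_eventually_constant (h : ℕ → ℕ) (j : ℕ)
    (hpos : ∀ d, 0 < h d) (hj : 0 < j)
    (hladder : ∀ d, j ≤ d → ∀ δ k, IsBinomialExpansion (h d) d δ k →
      h (d + 1) = ∑ i ∈ Finset.Icc δ d, Nat.choose (k i + 1) (i + 1)) :
    ∀ d, j ≤ d → ∀ δd kd δj kj,
      IsBinomialExpansion (h d) d δd kd → IsBinomialExpansion (h j) j δj kj →
        d - δd = j - δj ∧
          ∀ t ≤ d - δd, kd (d - t) - (d - t) = kj (j - t) - (j - t) := by
  intro d hd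
  induction d, hd using Nat.le_induction with
  | base =>
    intro δd kd δj kj h1 h2
    obtain ⟨hδ, hk⟩ := IBE_unique j (h j) _ _ _ _ h1 h2
    refine ⟨by omega, ?_⟩
    intro t ht
    have h1' := h1.2.1
    rw [hk (j - t) (by omega) (by omega)]
  | succ d hd IH =>
    intro δ' k' δj kj h1 h2
    obtain ⟨δ, k, hdk⟩ := IBE_exists d (h d) (by omega) (hpos d)
    have hstep := hladder d hd δ k hdk
    have hshift := IBE_shift hdk
    rw [← hstep] at hshift
    obtain ⟨hδeq, hkeq⟩ := IBE_unique (d + 1) (h (d + 1)) _ _ _ _ h1 hshift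
    obtain ⟨hL, hE⟩ := IH δ k δj kj hdk h2
    have hδd : δ ≤ d := hdk.2.1
    refine ⟨by omega, ?_⟩
    intro t ht
    have ht' : t ≤ d - δ := by omega
    have h1' := hkeq (d + 1 - t) (by omega) (by omega)
    have heq : d + 1 - t - 1 = d - t := by omega
    rw [h1', heq]
    have := hE t ht'
    omega
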